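/- For every positive integer n, the slab of dimensions 3×(3n+2)×(3n+2) can be tiled by trominoes. -/

import Mathlib

/-- Standard basis vectors of `ℤ³`. -/
def e3 : Fin 3 → ℤ × ℤ × ℤ
  | 0 => (1, 0, 0)
  | 1 => (0, 1, 0)
  | 2 => (0, 0, 1)

/-- A 3D L-tromino: a cell together with two cells adjacent to it along two
different coordinate axes (equivalently, a translate/axis-rotation of
`{(0,0,0),(1,0,0),(0,1,0)}`). -/
def IsTromino3 (s : Finset (ℤ × ℤ × ℤ)) : Prop :=
  ∃ (c : ℤ × ℤ × ℤ) (i j : Fin 3) (ε₁ ε₂ : ℤ), i ≠ j ∧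
    (ε₁ = 1 ∨ ε₁ = -1) ∧ (ε₂ = 1 ∨ ε₂ = -1) ∧
    s = {c, c + ε₁ • e3 i, c + ε₂ • e3 j}

/-- The axis-aligned box `[0,a) × [0,b) × [0,c)` in `ℤ³`. -/
noncomputable def box (a b c : ℕ) : Finset (ℤ × ℤ × ℤ) :=
  (Finset.Ico (0 : ℤ) a) ×ˢ (Finset.Ico (0 : ℤ) b) ×ˢ (Finset.Ico (0 : ℤ) c)

/-- `T` is a tiling of the region `R` by 3D trominoes: the trominoes are
pairwise disjoint and their union is exactly `R`. -/
def IsTiling3 (R : Finset (ℤ × ℤ × ℤ)) (T : Finset (Finset (ℤ × ℤ × ℤ))) : Prop :=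
  (∀ t ∈ T, IsTromino3 t) ∧
    (∀ t₁ ∈ T, ∀ t₂ ∈ T, t₁ ≠ t₂ → Disjoint t₁ t₂) ∧
    (∀ x, x ∈ R ↔ ∃ t ∈ T, x ∈ t)

/-! ### Auxiliary machinery -/

def Tileable (R : Finset (ℤ × ℤ × ℤ)) : Prop := ∃ T, IsTiling3 R T

def trom (c : ℤ × ℤ × ℤ) (i j : Fin 3) (ε₁ ε₂ : ℤ) : Finset (ℤ × ℤ × ℤ) :=
  {c, c + ε₁ • e3 i, c + ε₂ • e3 j}

lemma trom_isTromino (c : ℤ × ℤ × ℤ) (i j : Fin 3) (ε₁ ε₂ : ℤ) (hij : i ≠ j)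
    (h1 : ε₁ = 1 ∨ ε₁ = -1) (h2 : ε₂ = 1 ∨ ε₂ = -1) : IsTromino3 (trom c i j ε₁ ε₂) :=
  ⟨c, i, j, ε₁, ε₂, hij, h1, h2, rfl⟩

lemma tileable_empty : Tileable ∅ :=
  ⟨∅, by simp [IsTiling3]⟩

lemma tileable_union {R R' : Finset (ℤ × ℤ × ℤ)} (hdis : Disjoint R R')
    (hR : Tileable R) (hR' : Tileable R') : Tileable (R ∪ R') := by
  obtain ⟨T, hT1, hT2, hT3⟩ := hR
  obtain ⟨T', hT1', hT2', hT3'⟩ := hR'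
  have hsub : ∀ t ∈ T, t ⊆ R := fun t ht x hx => (hT3 x).2 ⟨t, ht, hx⟩
  have hsub' : ∀ t ∈ T', t ⊆ R' := fun t ht x hx => (hT3' x).2 ⟨t, ht, hx⟩
  refine ⟨T ∪ T', ?_, ?_, ?_⟩
  · intro t ht
    rcases Finset.mem_union.1 ht with h | h
    · exact hT1 t h
    · exact hT1' t h
  · intro t₁ h₁ t₂ h₂ hne
    rcases Finset.mem_union.1 h₁ with h₁ | h₁ <;> rcases Finset.mem_union.1 h₂ with h₂ | h₂
    · exact hT2 t₁ h₁ t₂ h₂ hne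
    · exact hdis.mono (hsub t₁ h₁) (hsub' t₂ h₂)
    · exact (hdis.symm).mono (hsub' t₁ h₁) (hsub t₂ h₂)
    · exact hT2' t₁ h₁ t₂ h₂ hne
  · intro x
    simp only [Finset.mem_union, hT3 x, hT3' x]
    constructor
    · rintro (⟨t, ht, hx⟩ | ⟨t, ht, hx⟩)
      · exact ⟨t, Or.inl ht, hx⟩
      · exact ⟨t, Or.inr ht, hx⟩
    · rintro ⟨t, ht, hx⟩
      rcases ht with h | h
      · exact Or.inl ⟨t, h, hx⟩
      · exact Or.inr ⟨t, h, hx⟩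

lemma tromino_translate {s : Finset (ℤ × ℤ × ℤ)} (v : ℤ × ℤ × ℤ) (hs : IsTromino3 s) :
    IsTromino3 (s.image (· + v)) := by
  obtain ⟨c, i, j, ε₁, ε₂, hij, h1, h2, rfl⟩ := hs
  refine ⟨c + v, i, j, ε₁, ε₂, hij, h1, h2, ?_⟩
  simp only [Finset.image_insert, Finset.image_singleton]
  rw [add_right_comm c (ε₁ • e3 i) v, add_right_comm c (ε₂ • e3 j) v]

lemma tileable_translate {R : Finset (ℤ × ℤ × ℤ)} (v : ℤ × ℤ × ℤ) (hR : Tileable R) :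
    Tileable (R.image (· + v)) := by
  obtain ⟨T, hT1, hT2, hT3⟩ := hR
  have hinj : Function.Injective (· + v : ℤ × ℤ × ℤ → ℤ × ℤ × ℤ) :=
    fun a b h => by simpa using h
  refine ⟨T.image (fun t => t.image (· + v)), ?_, ?_, ?_⟩
  · intro t ht
    obtain ⟨t₀, ht₀, rfl⟩ := Finset.mem_image.1 ht
    exact tromino_translate v (hT1 t₀ ht₀)
  · intro t₁ h₁ t₂ h₂ hne
    obtain ⟨s₁, hs₁, rfl⟩ := Finset.mem_image.1 h₁
    obtain ⟨s₂, hs₂, rfl⟩ := Finset.mem_image.1 h₂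
    have hne' : s₁ ≠ s₂ := fun h => hne (by rw [h])
    exact (Finset.disjoint_image hinj).2 (hT2 s₁ hs₁ s₂ hs₂ hne')
  · intro x
    constructor
    · intro hx
      obtain ⟨y, hy, rfl⟩ := Finset.mem_image.1 hx
      obtain ⟨t, ht, hyt⟩ := (hT3 y).1 hy
      exact ⟨t.image (· + v), Finset.mem_image_of_mem _ ht, Finset.mem_image_of_mem _ hyt⟩
    · rintro ⟨t, ht, hxt⟩
      obtain ⟨t₀, ht₀, rfl⟩ := Finset.mem_image.1 ht
      obtain ⟨y, hy, rfl⟩ := Finset.mem_image.1 hxt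
      exact Finset.mem_image_of_mem _ ((hT3 y).2 ⟨t₀, ht₀, hy⟩)

/-! ### Box splitting -/

lemma box_split_z (a b c d : ℕ) :
    box a b (c + d) =
      box a b c ∪ (box a b d).image (· + ((0 : ℤ), (0 : ℤ), (c : ℤ))) := by
  ext ⟨x, y, z⟩
  simp only [box, Finset.mem_union, Finset.mem_image, Finset.mem_product, Finset.mem_Ico,
    Prod.exists, Prod.mk_add_mk, Prod.mk.injEq]
  constructor
  · rintro ⟨hx, hy, hz⟩
    by_cases hzc : z < c
    · exact Or.inl ⟨hx, hy, hz.1, hzc⟩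
    · refine Or.inr ⟨x, y, z - c, ⟨hx, hy, by push_cast at hz ⊢; omega⟩, by omega, by omega,
        by omega⟩
  · rintro (⟨hx, hy, hz⟩ | ⟨p, q, r, ⟨hp, hq, hr⟩, h1, h2, h3⟩)
    · exact ⟨hx, hy, hz.1, by push_cast; omega⟩
    · exact ⟨by omega, by omega, by push_cast at hr ⊢; omega⟩

lemma box_disjoint_z (a b c d : ℕ) :
    Disjoint (box a b c) ((box a b d).image (· + ((0 : ℤ), (0 : ℤ), (c : ℤ)))) := by
  rw [Finset.disjoint_left]
  rintro ⟨x, y, z⟩ hx hx'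
  simp only [box, Finset.mem_image, Finset.mem_product, Finset.mem_Ico, Prod.exists,
    Prod.mk_add_mk, Prod.mk.injEq] at hx hx'
  obtain ⟨p, q, r, ⟨hp, hq, hr⟩, h1, h2, h3⟩ := hx'
  omega

lemma box_split_y (a b c d : ℕ) :
    box a (b + c) d =
      box a b d ∪ (box a c d).image (· + ((0 : ℤ), (b : ℤ), (0 : ℤ))) := by
  ext ⟨x, y, z⟩
  simp only [box, Finset.mem_union, Finset.mem_image, Finset.mem_product, Finset.mem_Ico,
    Prod.exists, Prod.mk_add_mk, Prod.mk.injEq]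
  constructor
  · rintro ⟨hx, hy, hz⟩
    by_cases hyb : y < b
    · exact Or.inl ⟨hx, ⟨hy.1, hyb⟩, hz⟩
    · refine Or.inr ⟨x, y - b, z, ⟨hx, by push_cast at hy ⊢; omega, hz⟩, by omega, by omega,
        by omega⟩
  · rintro (⟨hx, hy, hz⟩ | ⟨p, q, r, ⟨hp, hq, hr⟩, h1, h2, h3⟩)
    · exact ⟨hx, ⟨hy.1, by push_cast; omega⟩, hz⟩
    · exact ⟨by omega, by push_cast at hq ⊢; omega, by omega⟩

lemma box_disjoint_y (a b c d : ℕ) :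
    Disjoint (box a b d) ((box a c d).image (· + ((0 : ℤ), (b : ℤ), (0 : ℤ)))) := by
  rw [Finset.disjoint_left]
  rintro ⟨x, y, z⟩ hx hx'
  simp only [box, Finset.mem_image, Finset.mem_product, Finset.mem_Ico, Prod.exists,
    Prod.mk_add_mk, Prod.mk.injEq] at hx hx'
  obtain ⟨p, q, r, ⟨hp, hq, hr⟩, h1, h2, h3⟩ := hx'
  omega

/-! ### Base tilings -/

set_option maxHeartbeats 2000000 in
lemma tileable_of_parts (R : Finset (ℤ × ℤ × ℤ))
    (L : List ((ℤ × ℤ × ℤ) × Fin 3 × Fin 3 × ℤ × ℤ))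
    (hT : ∀ p ∈ L, p.2.1 ≠ p.2.2.1 ∧ (p.2.2.2.1 = 1 ∨ p.2.2.2.1 = -1) ∧
      (p.2.2.2.2 = 1 ∨ p.2.2.2.2 = -1))
    (hpair : ∀ t₁ ∈ (L.map fun p => trom p.1 p.2.1 p.2.2.1 p.2.2.2.1 p.2.2.2.2).toFinset,
      ∀ t₂ ∈ (L.map fun p => trom p.1 p.2.1 p.2.2.1 p.2.2.2.1 p.2.2.2.2).toFinset,
        t₁ ≠ t₂ → Disjoint t₁ t₂)
    (hR : R = ((L.map fun p => trom p.1 p.2.1 p.2.2.1 p.2.2.2.1 p.2.2.2.2).toFinset).sup id) :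
    Tileable R := by
  refine ⟨(L.map fun p => trom p.1 p.2.1 p.2.2.1 p.2.2.2.1 p.2.2.2.2).toFinset, ?_, ?_, ?_⟩
  · intro t ht
    rw [List.mem_toFinset, List.mem_map] at ht
    obtain ⟨p, hp, rfl⟩ := ht
    obtain ⟨h1, h2, h3⟩ := hT p hp
    exact trom_isTromino _ _ _ _ _ h1 h2 h3
  · exact hpair
  · intro x
    rw [hR, Finset.mem_sup]
    simp only [id]

set_option maxHeartbeats 2000000 in
lemma tileable_321 : Tileable (box 3 2 1) := by
  apply tileable_of_parts _ [((0,0,0), 0, 1, 1, 1), ((2,1,0), 0, 1, -1, -1)]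
  · decide
  · decide
  · decide

set_option maxHeartbeats 2000000 in
lemma tileable_312 : Tileable (box 3 1 2) := by
  apply tileable_of_parts _ [((0,0,0), 0, 2, 1, 1), ((2,0,1), 0, 2, -1, -1)]
  · decide
  · decide
  · decide

set_option maxHeartbeats 2000000 in
lemma tileable_333 : Tileable (box 3 3 3) := by
  apply tileable_of_parts _ [((0,0,0), 0, 1, 1, 1), ((0,0,1), 0, 2, 1, 1),
    ((0,1,1), 0, 1, 1, 1), ((0,1,2), 0, 1, 1, 1), ((1,2,0), 0, 1, -1, -1),
    ((2,0,2), 0, 1, -1, 1), ((1,2,2), 0, 2, 1, -1), ((2,0,0), 1, 2, 1, 1),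
    ((2,2,1), 1, 2, -1, -1)]
  · decide
  · decide
  · decide

/-! ### Strips and squares -/

lemma tileable_32m (m : ℕ) : Tileable (box 3 2 m) := by
  induction m with
  | zero => simpa [box] using tileable_empty
  | succ m ih =>
    rw [show m + 1 = m + 1 from rfl, box_split_z 3 2 m 1]
    exact tileable_union (box_disjoint_z 3 2 m 1) ih (tileable_translate _ tileable_321)

lemma tileable_3m2 (m : ℕ) : Tileable (box 3 m 2) := by
  induction m with
  | zero => simpa [box] using tileable_empty
  | succ m ih =>
    rw [box_split_y 3 m 1 2]
    exact tileable_union (box_disjoint_y 3 m 1 2) ih (tileable_translate _ tileable_312)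

lemma tileable_33_3m (m : ℕ) : Tileable (box 3 3 (3 * m)) := by
  induction m with
  | zero => simpa [box] using tileable_empty
  | succ m ih =>
    rw [show 3 * (m + 1) = 3 * m + 3 from by ring, box_split_z 3 3 (3 * m) 3]
    exact tileable_union (box_disjoint_z 3 3 (3 * m) 3) ih (tileable_translate _ tileable_333)

lemma tileable_3m3k (m k : ℕ) : Tileable (box 3 (3 * m) (3 * k)) := by
  induction m with
  | zero => simpa [box] using tileable_empty
  | succ m ih =>
    rw [show 3 * (m + 1) = 3 * m + 3 from by ring, box_split_y 3 (3 * m) 3 (3 * k)]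
    exact tileable_union (box_disjoint_y 3 (3 * m) 3 (3 * k)) ih
      (tileable_translate _ (tileable_33_3m k))

/-- For every positive integer `n`, the `3×(3n+2)×(3n+2)` slab can be tiled. -/
theorem tile_slab_two (n : ℕ) (hn : 0 < n) :
    ∃ T : Finset (Finset (ℤ × ℤ × ℤ)),
      IsTiling3 (box 3 (3 * n + 2) (3 * n + 2)) T := by
  have key : Tileable (box 3 (3 * n + 2) (3 * n + 2)) := by
    rw [show 3 * n + 2 = 2 + 3 * n from by ring, box_split_y 3 2 (3 * n) (2 + 3 * n)]
    refine tileable_union (box_disjoint_y 3 2 (3 * n) (2 + 3 * n)) ?_ ?_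
    · rw [show (2 + 3 * n) = 2 + 3 * n from rfl]
      have := tileable_32m (2 + 3 * n)
      exact this
    · refine tileable_translate _ ?_
      rw [box_split_z 3 (3 * n) 2 (3 * n)]
      exact tileable_union (box_disjoint_z 3 (3 * n) 2 (3 * n)) (tileable_3m2 (3 * n))
        (tileable_translate _ (tileable_3m3k n n))
  exact key
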